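/- Let k be an infinite field, n ≥ 1, and let 0 = V₀ ⊂ V₁ ⊂ ⋯ ⊂ Vₙ = kⁿ be a complete flag in kⁿ. Then there exists a basis e₁, …, eₙ of kⁿ such that for every subset S ⊆ {1, …, n} and every 0 ≤ i ≤ n, dim(V_i ∩ span{e_j : j ∈ S}) = max(0, i + |S| − n); that is, every span of a subset of the basis is in general position with every subspace of the flag (so the apartment of the flag building determined by the basis consists of chambers opposite the chamber determined by the flag). -/

import Mathlib

open Submodule Set Module

def auxEquivIio (n m : ℕ) (h : m ≤ n) : {j : Fin n // (j : ℕ) < m} ≃ Fin m where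
  toFun j := ⟨j.1.1, j.2⟩
  invFun x := ⟨⟨x.1, lt_of_lt_of_le x.2 h⟩, x.2⟩
  left_inv j := by ext; rfl
  right_inv x := rfl

lemma aux_card (n m : ℕ) (h : m ≤ n) :
    Fintype.card {j : Fin n // (j : ℕ) < m} = m := by
  rw [Fintype.card_congr (auxEquivIio n m h), Fintype.card_fin]

lemma aux_vdm {k : Type*} [Field k] {n : ℕ} {c : Fin n → k}
    (hcinj : Function.Injective c) (hc0 : ∀ j, c j ≠ 0)
    (i : ℕ) (T : Finset (Fin n)) (hT : i + T.card ≤ n)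
    (b : {x : Fin n // x ∈ T} → k)
    (hb : ∀ m : Fin n, i ≤ (m : ℕ) → ∑ j : {x : Fin n // x ∈ T}, b j * c j.1 ^ (m : ℕ) = 0) :
    ∀ j, b j = 0 := by
  classical
  set t := T.card with ht
  let σ : Fin t ≃ {x : Fin n // x ∈ T} := T.equivFin.symm
  set M := Matrix.of (fun m j : Fin t => c (σ j).1 ^ (i + (m : ℕ))) with hM
  have hdet : M.det ≠ 0 := by
    have hMT : M.transpose = Matrix.diagonal (fun j => c (σ j).1 ^ i) *
        Matrix.vandermonde (fun j => c (σ j).1) := by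
      ext j m
      simp [hM, Matrix.diagonal_mul, Matrix.vandermonde, pow_add, Matrix.transpose_apply]
    have h1 : M.det = M.transpose.det := (Matrix.det_transpose M).symm
    rw [h1, hMT, Matrix.det_mul, Matrix.det_diagonal, Matrix.det_vandermonde]
    apply mul_ne_zero
    · exact Finset.prod_ne_zero_iff.2 fun j _ => pow_ne_zero _ (hc0 _)
    · refine Finset.prod_ne_zero_iff.2 fun j _ => Finset.prod_ne_zero_iff.2 fun j' hj' => ?_
      rw [Finset.mem_Ioi] at hj'
      refine sub_ne_zero.2 fun hEq => ?_
      have h2 : (σ j') = σ j := Subtype.ext (hcinj hEq)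
      have h3 : j' = j := σ.injective h2
      exact absurd (h3 ▸ hj') (lt_irrefl _)
  have hmv : M.mulVec (b ∘ σ) = 0 := by
    funext m
    have hmn : i + (m : ℕ) < n := by omega
    have := hb ⟨i + (m : ℕ), hmn⟩ (by simp)
    calc M.mulVec (b ∘ σ) m = ∑ j : Fin t, c (σ j).1 ^ (i + (m : ℕ)) * b (σ j) := by
          simp [Matrix.mulVec, dotProduct, hM, Function.comp]
      _ = ∑ j : {x : Fin n // x ∈ T}, c j.1 ^ (i + (m : ℕ)) * b j :=
          Equiv.sum_comp σ (fun x => c x.1 ^ (i + (m : ℕ)) * b x)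
      _ = ∑ j : {x : Fin n // x ∈ T}, b j * c j.1 ^ (i + (m : ℕ)) := by
          simp [mul_comm]
      _ = 0 := this
  have hz : b ∘ σ = 0 := Matrix.eq_zero_of_mulVec_eq_zero hdet hmv
  intro j
  have := congrFun hz (σ.symm j)
  simpa using this


/-- opposite apartments in the flag building over an infinite field.
Let `k` be an infinite field, `n ≥ 1`, and let `0 = V₀ ⊂ V₁ ⊂ ⋯ ⊂ Vₙ = kⁿ` be a
complete flag in `kⁿ`.  Then there is a basis `e₁, …, eₙ` of `kⁿ` such that every
span of a subset of the basis is in general position with every subspace of the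
flag:  `dim (Vᵢ ⊓ span {eⱼ : j ∈ S}) = max (0, i + |S| − n)` (written with
truncated subtraction in `ℕ`). -/
theorem stmt5
    (k : Type*) [Field k] [Infinite k] (n : ℕ) (hn : 1 ≤ n)
    (V : Fin (n + 1) → Submodule k (Fin n → k))
    (hV0 : V 0 = ⊥) (hVtop : V (Fin.last n) = ⊤)
    (hchain : StrictMono V)
    (hdim : ∀ i : Fin (n + 1), Module.finrank k (V i) = (i : ℕ)) :
    ∃ b : Basis (Fin n) k (Fin n → k),
      ∀ (S : Finset (Fin n)) (i : Fin (n + 1)),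
        Module.finrank k ↥(V i ⊓ Submodule.span k (⇑b '' ↑S)) =
          (i : ℕ) + S.card - n := by
  classical
  -- distinct nonzero scalars
  obtain ⟨emb⟩ : Nonempty (ℕ ↪ k) := ⟨Infinite.natEmbedding k⟩
  set c : Fin n → k := fun j => emb ((j : ℕ) + 1) - emb 0 with hc
  have hcinj : Function.Injective c := by
    intro a b hab
    have h1 : emb ((a : ℕ) + 1) = emb ((b : ℕ) + 1) := sub_left_inj.mp hab
    have := emb.injective h1
    exact Fin.val_injective (by omega)
  have hc0 : ∀ j, c j ≠ 0 := by
    intro j h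
    have : emb ((j : ℕ) + 1) = emb 0 := sub_eq_zero.mp h
    have := emb.injective this
    omega
  -- adapted vectors
  have hlt : ∀ j : Fin n, V j.castSucc < V j.succ := fun j => hchain (Fin.castSucc_lt_succ (i := j))
  choose f hfmem hfnot using fun j : Fin n => SetLike.exists_of_lt (hlt j)
  have hmem : ∀ (j : Fin n) (i : Fin (n + 1)), (j : ℕ) < (i : ℕ) → f j ∈ V i := by
    intro j i hj
    exact hchain.monotone (show j.succ ≤ i from by
      rw [Fin.le_def]; simpa using hj) (hfmem j)
  have hfinj : Function.Injective f := by
    intro a b hab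
    by_contra hne
    rcases Fin.lt_or_lt_of_ne hne with h | h
    · exact hfnot b (hab ▸ hmem a b.castSucc (by simpa using h))
    · exact hfnot a (hab.symm ▸ hmem b a.castSucc (by simpa using h))
  -- the flag is spanned by the adapted vectors
  have key : ∀ m : ℕ, (hm : m ≤ n) →
      LinearIndependent k (fun x : (f '' {j : Fin n | (j : ℕ) < m}) => (x : Fin n → k)) ∧
      V ⟨m, by omega⟩ = span k (f '' {j : Fin n | (j : ℕ) < m}) := by
    intro m
    induction m with
    | zero =>
      intro _
      have h0 : {j : Fin n | (j : ℕ) < 0} = (∅ : Set (Fin n)) := by ext; simp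
      constructor
      · rw [h0, Set.image_empty]
        exact linearIndependent_empty_type
      · rw [h0, Set.image_empty, Submodule.span_empty]
        exact (show V ⟨0, by omega⟩ = ⊥ from hV0)
    | succ m ih =>
      intro hm
      obtain ⟨ihLI, ihSp⟩ := ih (by omega)
      set jm : Fin n := ⟨m, by omega⟩ with hjm
      have hset : {j : Fin n | (j : ℕ) < m + 1} = insert jm {j : Fin n | (j : ℕ) < m} := by
        ext x; simp [hjm, Fin.ext_iff]; omega
      have himg : f '' {j : Fin n | (j : ℕ) < m + 1} =
          insert (f jm) (f '' {j : Fin n | (j : ℕ) < m}) := by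
        rw [hset, Set.image_insert_eq]
      have hcs : V jm.castSucc = V ⟨m, by omega⟩ := by
        congr 1
      have hnot : f jm ∉ span k (f '' {j : Fin n | (j : ℕ) < m}) := by
        rw [← ihSp, ← hcs]
        exact hfnot jm
      have hLI : LinearIndependent k
          (fun x : (f '' {j : Fin n | (j : ℕ) < m + 1}) => (x : Fin n → k)) := by
        rw [himg]
        exact LinearIndepOn.id_insert ihLI hnot
      refine ⟨hLI, ?_⟩
      have hle : span k (f '' {j : Fin n | (j : ℕ) < m + 1}) ≤ V ⟨m + 1, by omega⟩ := by
        rw [Submodule.span_le]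
        rintro x ⟨j, hj, rfl⟩
        exact hmem j _ hj
      have hcard : (f '' {j : Fin n | (j : ℕ) < m + 1}).toFinset.card = m + 1 := by
        rw [Set.toFinset_card, Set.card_image_of_injective _ hfinj,
          ← Set.toFinset_card]
        have : ({j : Fin n | (j : ℕ) < m + 1}).toFinset.card
            = Fintype.card {j : Fin n // (j : ℕ) < m + 1} := Set.toFinset_card _
        rw [this, aux_card n (m + 1) hm]
      have hfr : finrank k (span k (f '' {j : Fin n | (j : ℕ) < m + 1})) = m + 1 := by
        rw [finrank_span_set_eq_card hLI, hcard]
      refine (Submodule.eq_of_le_of_finrank_le hle ?_).symm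
      rw [hfr, hdim ⟨m + 1, by omega⟩]
  have hVspan : ∀ i : Fin (n + 1), V i = span k (f '' {j : Fin n | (j : ℕ) < (i : ℕ)}) := by
    intro i
    have := (key (i : ℕ) (by omega)).2
    convert this using 2
  -- f is a basis
  have hfLI : LinearIndependent k f := by
    have huniv : {j : Fin n | (j : ℕ) < n} = Set.univ := by ext j; simp [j.isLt]
    have := (key n le_rfl).1
    rw [huniv, Set.image_univ] at this
    exact (linearIndepOn_id_range_iff hfinj).mp this
  haveI : Nonempty (Fin n) := ⟨⟨0, by omega⟩⟩
  let fB : Basis (Fin n) k (Fin n → k) :=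
    basisOfLinearIndependentOfCardEqFinrank hfLI (by simp [Module.finrank_fin_fun])
  have hfB : ⇑fB = f := coe_basisOfLinearIndependentOfCardEqFinrank _ _
  -- the generic basis
  set w : Fin n → (Fin n → k) := fun j m => c j ^ (m : ℕ) with hw
  set e : Fin n → (Fin n → k) := fun j => fB.equivFun.symm (w j) with he
  have hwLI : LinearIndependent k w := by
    have : w = fun j => (Matrix.vandermonde c) j := rfl
    rw [this]
    exact Matrix.linearIndependent_rows_iff_isUnit.mpr
      ((Matrix.isUnit_iff_isUnit_det _).mpr
        (isUnit_iff_ne_zero.mpr (Matrix.det_vandermonde_ne_zero_iff.mpr hcinj)))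
  have heLI : LinearIndependent k e := by
    have : e = (fB.equivFun.symm : (Fin n → k) →ₗ[k] (Fin n → k)) ∘ w := rfl
    rw [this]
    exact hwLI.map' _ (LinearMap.ker_eq_bot_of_injective fB.equivFun.symm.injective)
  have heco : ∀ j, fB.equivFun (e j) = w j := fun j => fB.equivFun.apply_symm_apply (w j)
  let eB : Basis (Fin n) k (Fin n → k) :=
    basisOfLinearIndependentOfCardEqFinrank heLI (by simp [Module.finrank_fin_fun])
  have heB : ⇑eB = e := coe_basisOfLinearIndependentOfCardEqFinrank _ _
  refine ⟨eB, ?_⟩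
  intro S i
  rw [heB]
  -- the key linear independence
  have hindep : ∀ (i : Fin (n + 1)) (T : Finset (Fin n)), (i : ℕ) + T.card ≤ n →
      LinearIndependent k (Sum.elim
        (fun j : {j : Fin n // (j : ℕ) < (i : ℕ)} => f j.1)
        (fun j : {x : Fin n // x ∈ T} => e j.1)) := by
    intro i T hT
    rw [Fintype.linearIndependent_iff]
    intro g hg
    rw [Fintype.sum_sum_type] at hg
    simp only [Sum.elim_inl, Sum.elim_inr] at hg
    -- coordinates
    have hco : ∀ m : Fin n,
        (∑ a : {j : Fin n // (j : ℕ) < (i : ℕ)}, g (Sum.inl a) * (if a.1 = m then (1:k) else 0))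
        + ∑ j : {x : Fin n // x ∈ T}, g (Sum.inr j) * c j.1 ^ (m : ℕ) = 0 := by
      intro m
      have h0 : fB.equivFun (∑ a : {j : Fin n // (j : ℕ) < (i : ℕ)}, g (Sum.inl a) • f a.1
          + ∑ j : {x : Fin n // x ∈ T}, g (Sum.inr j) • e j.1) m = (0 : k) := by
        rw [hg]; simp
      rw [map_add, map_sum, map_sum] at h0
      simp only [map_smul] at h0
      rw [Pi.add_apply, Finset.sum_apply, Finset.sum_apply] at h0
      simp only [Pi.smul_apply, smul_eq_mul, heco, ← hfB, Basis.equivFun_self] at h0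
      simpa [hw] using h0
    have hb : ∀ m : Fin n, (i : ℕ) ≤ (m : ℕ) →
        ∑ j : {x : Fin n // x ∈ T}, g (Sum.inr j) * c j.1 ^ (m : ℕ) = 0 := by
      intro m hm
      have h0 := hco m
      have hz : ∑ a : {j : Fin n // (j : ℕ) < (i : ℕ)},
          g (Sum.inl a) * (if a.1 = m then (1:k) else 0) = 0 :=
        Finset.sum_eq_zero (fun a _ => by
          have hne : a.1 ≠ m := by
            intro hEq
            have := a.2
            rw [hEq] at this
            omega
          simp [hne])
      rw [hz, zero_add] at h0
      exact h0
    have hzr : ∀ j, g (Sum.inr j) = 0 :=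
      aux_vdm hcinj hc0 (i : ℕ) T hT (fun j => g (Sum.inr j)) hb
    have hg' : ∑ a : {j : Fin n // (j : ℕ) < (i : ℕ)}, g (Sum.inl a) • f a.1 = 0 := by
      have hz2 : ∑ j : {x : Fin n // x ∈ T}, g (Sum.inr j) • e j.1 = 0 :=
        Finset.sum_eq_zero fun j _ => by rw [hzr j, zero_smul]
      rwa [hz2, add_zero] at hg
    have hzl : ∀ a, g (Sum.inl a) = 0 :=
      Fintype.linearIndependent_iff.mp
        (hfLI.comp (Subtype.val : {j : Fin n // (j : ℕ) < (i : ℕ)} → Fin n)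
          Subtype.val_injective) _ hg'
    intro x
    cases x with
    | inl a => exact hzl a
    | inr j => exact hzr j
  -- ranges of the combined family
  have hr1 : ∀ i : Fin (n + 1),
      Set.range (fun j : {j : Fin n // (j : ℕ) < (i : ℕ)} => f j.1)
        = f '' {j : Fin n | (j : ℕ) < (i : ℕ)} := by
    intro i
    ext x
    constructor
    · rintro ⟨j, rfl⟩; exact ⟨j.1, j.2, rfl⟩
    · rintro ⟨j, hj, rfl⟩; exact ⟨⟨j, hj⟩, rfl⟩
  have hr2 : ∀ T : Finset (Fin n),
      Set.range (fun j : {x : Fin n // x ∈ T} => e j.1) = e '' ↑T := by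
    intro T
    ext x
    constructor
    · rintro ⟨j, rfl⟩; exact ⟨j.1, j.2, rfl⟩
    · rintro ⟨j, hj, rfl⟩; exact ⟨⟨j, hj⟩, rfl⟩
  have hsum_span : ∀ (i : Fin (n + 1)) (T : Finset (Fin n)),
      span k (Set.range (Sum.elim
        (fun j : {j : Fin n // (j : ℕ) < (i : ℕ)} => f j.1)
        (fun j : {x : Fin n // x ∈ T} => e j.1))) = V i ⊔ span k (e '' ↑T) := by
    intro i T
    rw [Set.Sum.elim_range, Submodule.span_union, hr1 i, hr2 T, ← hVspan i]
  have hsup : ∀ (i : Fin (n + 1)) (T : Finset (Fin n)), (i : ℕ) + T.card ≤ n →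
      finrank k ↥(V i ⊔ span k (e '' ↑T)) = (i : ℕ) + T.card := by
    intro i T hiT
    rw [← hsum_span i T, finrank_span_eq_card (hindep i T hiT), Fintype.card_sum,
      Fintype.card_coe, aux_card n (i : ℕ) (by omega)]
  have hfinS : finrank k (span k (e '' ↑S)) = S.card := by
    rw [← hr2 S, finrank_span_eq_card (show LinearIndependent k
      (fun j : {x : Fin n // x ∈ S} => e j.1) from heLI.comp _ Subtype.val_injective),
      Fintype.card_coe]
  have h2 := Submodule.finrank_sup_add_finrank_inf_eq (V i) (span k (e '' ↑S))
  rw [hdim i, hfinS] at h2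
  by_cases hcase : (i : ℕ) + S.card ≤ n
  · have h1 := hsup i S hcase
    omega
  · obtain ⟨T, hTS, hTcard⟩ := Finset.exists_subset_card_eq
      (show n - (i : ℕ) ≤ S.card by omega)
    have hin : (i : ℕ) ≤ n := by omega
    have h1 := hsup i T (by omega)
    have hle : V i ⊔ span k (e '' ↑T) ≤ V i ⊔ span k (e '' ↑S) :=
      sup_le_sup_left (Submodule.span_mono
        (Set.image_mono (Finset.coe_subset.mpr hTS))) _
    have hge : n ≤ finrank k ↥(V i ⊔ span k (e '' ↑S)) := by
      have := Submodule.finrank_mono hle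
      omega
    have hle' : finrank k ↥(V i ⊔ span k (e '' ↑S)) ≤ n := by
      have := Submodule.finrank_le (V i ⊔ span k (e '' ↑S))
      rwa [Module.finrank_fin_fun] at this
    omega
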